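/- Let l ≥ 2 be an integer and ε > 0. There exists a constant C > 0 depending only on l and ε such that for all integers n ≥ 1: | ∑_{i=1}^{n} ∑ μ(d_1)μ(d_2)/(d_1 d_2)^{l−1} − n·∏_p (1 − 2/p^l) | ≤ C·n^ε, where the inner sum runs over pairs of positive integers (d_1, d_2) with d_1 d_2 ≤ i, d_1 ∣ i, d_2 ∣ i + 1 and gcd(d_1, d_2) = 1, and the product runs over all primes p. -/

import Mathlib

open Finset ArithmeticFunction
open scoped ArithmeticFunction.Moebius

lemma cardAnti (m : ℕ) : #m.divisorsAntidiagonal = #m.divisors := by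
  rw [← Nat.image_fst_divisorsAntidiagonal]
  refine (Finset.card_image_of_injOn ?_).symm
  intro x hx y hy hxy
  simp only [Finset.mem_coe] at hx hy
  rw [Nat.mem_divisorsAntidiagonal] at hx hy
  have hx1 : x.1 ≠ 0 := by rintro h; rw [h, zero_mul] at hx; exact hx.2 hx.1.symm
  have : x.2 = y.2 := by
    have := hx.1.trans hy.1.symm
    rw [hxy] at this
    exact Nat.eq_of_mul_eq_mul_left (Nat.pos_of_ne_zero (hxy ▸ hx1)) this
  exact Prod.ext hxy this

-- key identity: restricted (unitary) convolution of mu with mu equals mu * tau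
lemma lem_id (m : ℕ) :
    (∑ x ∈ m.divisorsAntidiagonal, if Nat.gcd x.1 x.2 = 1 then (μ x.1 * μ x.2 : ℤ) else 0)
      = μ m * #m.divisors := by
  by_cases hsq : Squarefree m
  · have hm0 : m ≠ 0 := hsq.ne_zero
    rw [Finset.sum_congr rfl (fun x hx => ?_)]
    · rw [Finset.sum_const, cardAnti, nsmul_eq_mul, mul_comm]
    · rw [Nat.mem_divisorsAntidiagonal] at hx
      have hcop : Nat.Coprime x.1 x.2 := by
        have := hsq
        rw [← hx.1] at this
        exact Nat.squarefree_mul_iff.mp this |>.1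
      rw [if_pos hcop, ← hx.1, isMultiplicative_moebius.map_mul_of_coprime hcop]
  · -- m not squarefree: both sides are 0
    have hμ : μ m = 0 := ArithmeticFunction.moebius_eq_zero_of_not_squarefree hsq
    rw [hμ, zero_mul]
    refine Finset.sum_eq_zero fun x hx => ?_
    rw [Nat.mem_divisorsAntidiagonal] at hx
    split_ifs with h
    · rcases eq_or_ne (μ x.1) 0 with h1 | h1
      · rw [h1, zero_mul]
      rcases eq_or_ne (μ x.2) 0 with h2 | h2
      · rw [h2, mul_zero]
      exfalso
      apply hsq
      rw [← hx.1]
      refine Nat.squarefree_mul_iff.mpr ⟨h, ?_, ?_⟩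
      · exact ArithmeticFunction.moebius_ne_zero_iff_squarefree.mp h1
      · exact ArithmeticFunction.moebius_ne_zero_iff_squarefree.mp h2
    · rfl

lemma hypRegroup (u : ℕ × ℕ → ℝ) (N : ℕ) :
    ∑ m ∈ Icc 1 N, ∑ x ∈ m.divisorsAntidiagonal, u x
      = ∑ x ∈ (Icc 1 N ×ˢ Icc 1 N).filter (fun p => p.1 * p.2 ≤ N), u x := by
  rw [← Finset.sum_biUnion]
  · congr 1
    ext x
    simp only [Finset.mem_biUnion, Nat.mem_divisorsAntidiagonal, Finset.mem_filter,
      Finset.mem_product, Finset.mem_Icc]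
    constructor
    · rintro ⟨m, hm, hx, hm0⟩
      have h1 : 1 ≤ x.1 := Nat.pos_of_ne_zero (by rintro h; rw [h, zero_mul] at hx; omega)
      have h2 : 1 ≤ x.2 := Nat.pos_of_ne_zero (by rintro h; rw [h, mul_zero] at hx; omega)
      have hxle : x.1 * x.2 ≤ N := hx ▸ hm.2
      refine ⟨⟨⟨h1, le_trans (Nat.le_mul_of_pos_right _ h2) hxle⟩,
        ⟨h2, le_trans (Nat.le_mul_of_pos_left _ h1) hxle⟩⟩, hxle⟩
    · rintro ⟨⟨⟨h1, _⟩, ⟨h2, _⟩⟩, hle⟩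
      exact ⟨x.1 * x.2, ⟨Nat.one_le_iff_ne_zero.mpr
        (Nat.mul_ne_zero (by omega) (by omega)), hle⟩, rfl, by positivity⟩
  · intro a _ b _ hab
    simp only [Function.onFun, Finset.disjoint_left]
    intro x hxa hxb
    rw [Nat.mem_divisorsAntidiagonal] at hxa hxb
    exact hab (hxa.1.symm.trans hxb.1)

lemma countAP {n a b : ℕ} (ha : 1 ≤ a) (hb : 1 ≤ b) (hcop : Nat.Coprime a b)
    (hmn : a * b ≤ n) :
    n / (a * b) - 1 ≤ #((Icc 1 n).filter (fun i => a ∣ i ∧ b ∣ (i + 1) ∧ a * b ≤ i)) ∧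
    #((Icc 1 n).filter (fun i => a ∣ i ∧ b ∣ (i + 1) ∧ a * b ≤ i)) ≤ n / (a * b) := by
  set m := a * b with hm
  have hm1 : 1 ≤ m := Nat.one_le_iff_ne_zero.mpr (Nat.mul_ne_zero (by omega) (by omega))
  constructor
  · -- lower bound via CRT
    set r : ℕ := (Nat.chineseRemainder hcop 0 (b - 1) : ℕ) with hrdef
    have hr1 : r ≡ 0 [MOD a] := (Nat.chineseRemainder hcop 0 (b - 1)).2.1
    have hr2 : r ≡ b - 1 [MOD b] := (Nat.chineseRemainder hcop 0 (b - 1)).2.2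
    have hrlt : r < m := Nat.chineseRemainder_lt_mul hcop 0 (b - 1) (by omega) (by omega)
    have hra : a ∣ r := (Nat.modEq_zero_iff_dvd).mp hr1
    have hrb : b ∣ r + 1 := by
      have h1 : r + 1 ≡ (b - 1) + 1 [MOD b] := hr2.add_right 1
      have h2 : (b - 1) + 1 = b := by omega
      rw [h2] at h1
      have h3 : b ≡ 0 [MOD b] := (Nat.modEq_zero_iff_dvd).mpr dvd_rfl
      exact (Nat.modEq_zero_iff_dvd).mp (h1.trans h3)
    have hcard : #(Icc 1 (n / m - 1)) = n / m - 1 := by rw [Nat.card_Icc, Nat.add_sub_cancel]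
    rw [← hcard]
    apply Finset.card_le_card_of_injOn (fun k => r + k * m)
    · intro k hk
      rw [Finset.mem_coe, Finset.mem_Icc] at hk
      have hnm1 : 1 ≤ n / m := (Nat.one_le_div_iff (by omega)).mpr hmn
      have hk1 : k + 1 ≤ n / m := by omega
      have hin : r + k * m < (k + 1) * m := by
        have : (k + 1) * m = k * m + m := by ring
        omega
      have hile : (k + 1) * m ≤ n := le_trans (Nat.mul_le_mul_right m hk1) (Nat.div_mul_le_self n m)
      rw [Finset.mem_coe, Finset.mem_filter, Finset.mem_Icc]
      beta_reduce
      refine ⟨⟨by nlinarith [hk.1], by omega⟩, ?_, ?_, ?_⟩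
      · exact dvd_add hra (Dvd.dvd.mul_left (dvd_mul_right a b) k)
      · have : r + k * m + 1 = (r + 1) + k * m := by ring
        rw [this]
        exact dvd_add hrb (Dvd.dvd.mul_left (dvd_mul_left b a) k)
      · calc m ≤ k * m := Nat.le_mul_of_pos_left m (by omega)
          _ ≤ r + k * m := Nat.le_add_left _ _
    · intro k _ k' _ h
      simpa [Nat.add_right_cancel_iff, Nat.mul_left_cancel_iff,
        Nat.mul_right_cancel_iff (show 0 < m by omega)] using h
  · -- upper bound
    have key : ∀ i ∈ (Icc 1 n).filter (fun i => a ∣ i ∧ b ∣ (i + 1) ∧ a * b ≤ i),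
        ∀ j ∈ (Icc 1 n).filter (fun i => a ∣ i ∧ b ∣ (i + 1) ∧ a * b ≤ i),
        i ≤ j → i / m = j / m → i = j := by
      intro i hi j hj hij hdiv
      rw [Finset.mem_filter, Finset.mem_Icc] at hi hj
      have hda : a ∣ j - i := Nat.dvd_sub hj.2.1 hi.2.1
      have hdb : b ∣ j - i := by
        have := Nat.dvd_sub hj.2.2.1 hi.2.2.1
        simpa using this
      have hdm : m ∣ j - i := Nat.Coprime.mul_dvd_of_dvd_of_dvd hcop hda hdb
      have hlt : j - i < m := by
        have e1 := Nat.div_add_mod i m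
        have e2 := Nat.div_add_mod j m
        have e3 : i % m < m := Nat.mod_lt _ (by omega)
        have e4 : j % m < m := Nat.mod_lt _ (by omega)
        rw [hdiv] at e1
        omega
      have := Nat.eq_zero_of_dvd_of_lt hdm
      omega
    have hcard : n / m = #(Icc 1 (n / m)) := by rw [Nat.card_Icc, Nat.add_sub_cancel]
    rw [hcard]
    apply Finset.card_le_card_of_injOn (fun i => i / m)
    · intro i hi
      rw [Finset.mem_coe, Finset.mem_filter, Finset.mem_Icc] at hi
      rw [Finset.mem_coe, Finset.mem_Icc]
      exact ⟨(Nat.one_le_div_iff (by omega)).mpr hi.2.2.2, Nat.div_le_div_right hi.1.2⟩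
    · intro i hi j hj h
      rcases le_total i j with hle | hle
      · exact key i hi j hj hle h
      · exact (key j hj i hi hle h.symm).symm

lemma phi_mul (l : ℕ) (δ : ℝ) (a b : ℕ) :
    (1 / ((a:ℝ)^(l-1) * (a:ℝ)^δ)) * (1 / ((b:ℝ)^(l-1) * (b:ℝ)^δ))
      = 1 / ((((a*b : ℕ)):ℝ)^(l-1) * (((a*b : ℕ)):ℝ)^δ) := by
  push_cast
  rw [mul_pow, Real.mul_rpow (by positivity) (by positivity)]
  rw [div_mul_div_comm, one_mul]
  ring_nf

lemma phi_summable (l : ℕ) (hl : 2 ≤ l) (δ : ℝ) (hδ0 : 0 < δ) :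
    Summable (fun d : ℕ => 1 / ((d:ℝ)^(l-1) * (d:ℝ)^δ)) := by
  refine Summable.of_nonneg_of_le (fun d => by positivity) (fun d => ?_)
    ((Real.summable_one_div_nat_rpow (p := (1:ℝ)+δ)).mpr (by linarith))
  · 
    rcases Nat.eq_zero_or_pos d with rfl | hd
    · simp [Real.zero_rpow (by positivity : (1:ℝ)+δ ≠ 0), Real.zero_rpow hδ0.ne',
        zero_pow (by omega : l - 1 ≠ 0)]
    · have hd1 : (1:ℝ) ≤ (d:ℝ) := by exact_mod_cast hd
      apply one_div_le_one_div_of_le (by positivity)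
      rw [Real.rpow_add (by positivity), Real.rpow_one]
      apply mul_le_mul_of_nonneg_right _ (by positivity)
      calc (d:ℝ) = (d:ℝ)^1 := (pow_one _).symm
        _ ≤ (d:ℝ)^(l-1) := pow_le_pow_right₀ hd1 (by omega)

lemma B_eq (l : ℕ) (δ : ℝ) (m : ℕ) :
    (#m.divisors : ℝ) / ((m:ℝ)^(l-1) * (m:ℝ)^δ)
      = ∑ x ∈ m.divisorsAntidiagonal,
          (1 / ((x.1:ℝ)^(l-1) * (x.1:ℝ)^δ)) * (1 / ((x.2:ℝ)^(l-1) * (x.2:ℝ)^δ)) := by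
  rcases Nat.eq_zero_or_pos m with rfl | hm
  · simp
  calc (#m.divisors : ℝ) / ((m:ℝ)^(l-1) * (m:ℝ)^δ)
      = (#m.divisorsAntidiagonal : ℝ) * (1 / ((m:ℝ)^(l-1) * (m:ℝ)^δ)) := by
        rw [cardAnti, mul_one_div]
    _ = ∑ _x ∈ m.divisorsAntidiagonal, 1 / ((m:ℝ)^(l-1) * (m:ℝ)^δ) := by
        rw [Finset.sum_const, nsmul_eq_mul]
    _ = ∑ x ∈ m.divisorsAntidiagonal,
          (1 / ((x.1:ℝ)^(l-1) * (x.1:ℝ)^δ)) * (1 / ((x.2:ℝ)^(l-1) * (x.2:ℝ)^δ)) := by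
        refine Finset.sum_congr rfl fun x hx => ?_
        rw [Nat.mem_divisorsAntidiagonal] at hx
        rw [phi_mul, hx.1]

lemma B_bound (l : ℕ) (hl : 2 ≤ l) (δ : ℝ) (hδ0 : 0 < δ) :
    Summable (fun m : ℕ => (#m.divisors : ℝ) / ((m:ℝ)^(l-1) * (m:ℝ)^δ)) ∧
    ∑' m : ℕ, (#m.divisors : ℝ) / ((m:ℝ)^(l-1) * (m:ℝ)^δ)
      ≤ (∑' d : ℕ, 1/((d:ℝ)^(l-1)*(d:ℝ)^δ)) * (∑' d : ℕ, 1/((d:ℝ)^(l-1)*(d:ℝ)^δ)) := by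
  set φ : ℕ → ℝ := fun d => 1 / ((d:ℝ)^(l-1) * (d:ℝ)^δ) with hφdef
  set B : ℕ → ℝ := fun m => (#m.divisors : ℝ) / ((m:ℝ)^(l-1) * (m:ℝ)^δ) with hBdef
  set K : ℝ := ∑' d : ℕ, φ d with hKdef
  have hφs : Summable φ := phi_summable l hl δ hδ0
  have hφnn : ∀ d, 0 ≤ φ d := fun d => by positivity
  have hBnn : ∀ m, 0 ≤ B m := fun m => by positivity
  have hB0 : B 0 = 0 := by simp [hBdef]
  have hrange : ∀ N : ℕ, ∑ m ∈ Finset.range N, B m ≤ K * K := by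
    intro N
    have h1 : ∑ m ∈ Finset.range N, B m ≤ ∑ m ∈ insert 0 (Icc 1 N), B m := by
      apply Finset.sum_le_sum_of_subset_of_nonneg
      · intro m hm
        simp only [Finset.mem_range] at hm
        simp only [Finset.mem_insert, Finset.mem_Icc]
        omega
      · intro m _ _; exact hBnn m
    have h2 : ∑ m ∈ insert 0 (Icc 1 N), B m = ∑ m ∈ Icc 1 N, B m := by
      rw [Finset.sum_insert (by simp), hB0, zero_add]
    have h3 : ∑ m ∈ Icc 1 N, B m
        = ∑ x ∈ (Icc 1 N ×ˢ Icc 1 N).filter (fun p => p.1 * p.2 ≤ N),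
            φ x.1 * φ x.2 := by
      rw [← hypRegroup (fun x => φ x.1 * φ x.2) N]
      exact Finset.sum_congr rfl fun m _ => B_eq l δ m
    have h4 : ∑ x ∈ (Icc 1 N ×ˢ Icc 1 N).filter (fun p => p.1 * p.2 ≤ N), φ x.1 * φ x.2
        ≤ ∑ x ∈ Icc 1 N ×ˢ Icc 1 N, φ x.1 * φ x.2 := by
      apply Finset.sum_le_sum_of_subset_of_nonneg (Finset.filter_subset _ _)
      intro x _ _
      exact mul_nonneg (hφnn _) (hφnn _)
    have h5 : ∑ x ∈ Icc 1 N ×ˢ Icc 1 N, φ x.1 * φ x.2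
        = (∑ a ∈ Icc 1 N, φ a) * (∑ b ∈ Icc 1 N, φ b) := by
      rw [Finset.sum_product, ← Finset.sum_mul_sum]
    have h6 : (∑ a ∈ Icc 1 N, φ a) ≤ K := Summable.sum_le_tsum _ (fun d _ => hφnn d) hφs
    have h7 : 0 ≤ ∑ a ∈ Icc 1 N, φ a := Finset.sum_nonneg fun d _ => hφnn d
    calc ∑ m ∈ Finset.range N, B m ≤ ∑ m ∈ Icc 1 N, B m := h1.trans h2.le
      _ ≤ (∑ a ∈ Icc 1 N, φ a) * (∑ b ∈ Icc 1 N, φ b) := by rw [h3]; rw [← h5] at *; exact h4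
      _ ≤ K * K := mul_le_mul h6 h6 h7 (le_trans h7 h6)
  have hBs : Summable B := summable_of_sum_range_le hBnn hrange
  exact ⟨hBs, Summable.tsum_le_of_sum_range_le hBs hrange⟩

lemma g_one (l : ℕ) : ((μ 1 : ℤ):ℝ) * (#(Nat.divisors 1) : ℝ) / ((1:ℕ):ℝ)^l = 1 := by
  simp

lemma g_mul (l : ℕ) {m k : ℕ} (h : Nat.Coprime m k) :
    ((μ (m*k) : ℤ):ℝ) * (#(Nat.divisors (m*k)) : ℝ) / (((m*k : ℕ)):ℝ)^l
      = (((μ m : ℤ):ℝ) * (#m.divisors : ℝ) / ((m:ℕ):ℝ)^l)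
        * (((μ k : ℤ):ℝ) * (#k.divisors : ℝ) / ((k:ℕ):ℝ)^l) := by
  rcases Nat.eq_zero_or_pos m with rfl | hm
  · have : k = 1 := Nat.coprime_zero_left k |>.mp h
    subst this; simp
  rcases Nat.eq_zero_or_pos k with rfl | hk
  · have : m = 1 := Nat.coprime_zero_right m |>.mp h
    subst this; simp
  rw [isMultiplicative_moebius.map_mul_of_coprime h, Nat.Coprime.card_divisors_mul h]
  push_cast
  ring

lemma g_euler_factor (l : ℕ) (hl : 2 ≤ l) (p : ℕ) (hp : p.Prime) :
    ∑' e : ℕ, ((μ (p^e) : ℤ):ℝ) * (#(Nat.divisors (p^e)) : ℝ) / (((p^e : ℕ)):ℝ)^l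
      = 1 - 2 / (p:ℝ)^l := by
  rw [tsum_eq_sum (s := {0, 1}) ?_]
  · rw [Finset.sum_insert (by simp), Finset.sum_singleton]
    have h1 : (p:ℕ)^(0:ℕ) = 1 := pow_zero p
    have h2 : (p:ℕ)^(1:ℕ) = p := pow_one p
    rw [h1, h2]
    have hμ : μ p = -1 := moebius_apply_prime hp
    have hd : p.divisors = {1, p} := Nat.Prime.divisors hp
    have hcard : #p.divisors = 2 := by
      rw [hd, Finset.card_insert_of_notMem (by simp [hp.one_lt.ne]), Finset.card_singleton]
    rw [hμ, hcard]
    simp only [moebius_apply_one, Nat.divisors_one, Finset.card_singleton]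
    push_cast
    have hp0 : (0:ℝ) < (p:ℝ) := by exact_mod_cast hp.pos
    have hppos : (0:ℝ) < (p:ℝ)^l := by positivity
    field_simp
    ring
  · intro e he
    simp only [Finset.mem_insert, Finset.mem_singleton] at he
    push_neg at he
    have : μ (p^e) = 0 := by
      rw [moebius_apply_prime_pow hp he.1, if_neg he.2]
    rw [this]
    simp

lemma g_euler (l : ℕ) (hl : 2 ≤ l)
    (hsum : Summable (fun m : ℕ =>
      ‖((μ m : ℤ):ℝ) * (#m.divisors : ℝ) / ((m:ℕ):ℝ)^l‖)) :
    ∏' p : Nat.Primes, (1 - 2 / ((p:ℕ):ℝ)^l)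
      = ∑' m : ℕ, ((μ m : ℤ):ℝ) * (#m.divisors : ℝ) / ((m:ℕ):ℝ)^l := by
  rw [← EulerProduct.eulerProduct_tprod (f := fun m : ℕ =>
      ((μ m : ℤ):ℝ) * (#m.divisors : ℝ) / ((m:ℕ):ℝ)^l)
      (g_one l) (fun {m k} h => g_mul l h) hsum (by simp)]
  exact tprod_congr fun p => (g_euler_factor l hl p p.2).symm
set_option maxHeartbeats 1000000 in
theorem statement9 (l : ℕ) (hl : 2 ≤ l) (ε : ℝ) (hε : 0 < ε) :
    ∃ C : ℝ, 0 < C ∧ ∀ n : ℕ, 1 ≤ n →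
      |(∑ i ∈ Finset.Icc 1 n, ∑ d₁ ∈ i.divisors, ∑ d₂ ∈ (i + 1).divisors,
          if d₁ * d₂ ≤ i ∧ Nat.gcd d₁ d₂ = 1 then
            ((ArithmeticFunction.moebius d₁ * ArithmeticFunction.moebius d₂ : ℤ) : ℝ)
              / ((d₁ : ℝ) * (d₂ : ℝ)) ^ (l - 1)
          else 0)
        - (n : ℝ) * ∏' p : Nat.Primes, (1 - 2 / ((p : ℕ) : ℝ) ^ l)|
      ≤ C * (n : ℝ) ^ ε := by
  have hmin : 0 < min ε 1 := lt_min hε one_pos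
  set δ : ℝ := min ε 1 / 2 with hδdef
  have hδ0 : 0 < δ := by positivity
  have hδε : δ ≤ ε := by
    have h1 : min ε 1 ≤ ε := min_le_left _ _
    simp only [hδdef]; linarith
  have hδ1 : δ ≤ 1 := by
    have h1 : min ε 1 ≤ 1 := min_le_right _ _
    simp only [hδdef]; linarith
  set φ : ℕ → ℝ := fun d => 1 / ((d:ℝ)^(l-1) * (d:ℝ)^δ) with hφdef
  set K : ℝ := ∑' d : ℕ, φ d with hKdef
  have hφs : Summable φ := phi_summable l hl δ hδ0
  have hφnn : ∀ d, 0 ≤ φ d := fun d => by positivity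
  have hK0 : 0 ≤ K := tsum_nonneg hφnn
  set B : ℕ → ℝ := fun m => (#m.divisors : ℝ) / ((m:ℝ)^(l-1) * (m:ℝ)^δ) with hBdef
  have hBs : Summable B := (B_bound l hl δ hδ0).1
  have hBK : ∑' m : ℕ, B m ≤ K * K := (B_bound l hl δ hδ0).2
  have hBnn : ∀ m, 0 ≤ B m := fun m => by positivity
  set g : ℕ → ℝ := fun m => ((μ m : ℤ):ℝ) * (#m.divisors : ℝ) / ((m:ℕ):ℝ)^l with hgdef
  have hg0 : g 0 = 0 := by simp [hgdef]
  -- pointwise norm bound for g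
  have habs2 : ∀ m : ℕ, 1 ≤ m → ‖g m‖ ≤ (#m.divisors : ℝ) / ((m:ℝ))^l := by
    intro m hm
    have hm1 : (1:ℝ) ≤ (m:ℝ) := by exact_mod_cast hm
    simp only [hgdef, Real.norm_eq_abs, abs_div, abs_mul]
    have h1 : |((μ m : ℤ):ℝ)| ≤ 1 := by
      have := ArithmeticFunction.abs_moebius_le_one (n := m)
      exact_mod_cast this
    rw [abs_of_nonneg (by positivity : (0:ℝ) ≤ (#m.divisors : ℝ)),
      abs_of_nonneg (by positivity : (0:ℝ) ≤ ((m:ℝ))^l)]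
    apply div_le_div_of_nonneg_right ?_ (by positivity)
    · nlinarith [abs_nonneg (((μ m : ℤ):ℝ)), Nat.cast_nonneg (α := ℝ) (#m.divisors)]
  have hg_le_B : ∀ m : ℕ, ‖g m‖ ≤ B m := by
    intro m
    rcases Nat.eq_zero_or_pos m with rfl | hm
    · simp [hgdef, hBdef]
    have hm1 : (1:ℝ) ≤ (m:ℝ) := by exact_mod_cast hm
    refine (habs2 m hm).trans ?_
    simp only [hBdef]
    have hle : (m:ℝ)^(l-1) * (m:ℝ)^δ ≤ (m:ℝ)^l := by
      have h1 : (m:ℝ)^δ ≤ (m:ℝ) := by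
        calc (m:ℝ)^δ ≤ (m:ℝ)^(1:ℝ) := Real.rpow_le_rpow_of_exponent_le hm1 hδ1
          _ = (m:ℝ) := Real.rpow_one _
      calc (m:ℝ)^(l-1) * (m:ℝ)^δ ≤ (m:ℝ)^(l-1) * (m:ℝ) :=
            mul_le_mul_of_nonneg_left h1 (by positivity)
        _ = (m:ℝ)^l := by rw [← pow_succ]; congr 1; omega
    apply div_le_div_of_nonneg_left (by positivity) (by positivity) hle
  have hgnorm : Summable (fun m : ℕ => ‖g m‖) :=
    Summable.of_nonneg_of_le (fun m => norm_nonneg _) hg_le_B hBs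
  have hgsum : Summable g := hgnorm.of_norm
  have hP : ∏' p : Nat.Primes, (1 - 2 / ((p:ℕ):ℝ)^l) = ∑' m : ℕ, g m :=
    g_euler l hl hgnorm
  refine ⟨3*K*K + 1, by positivity, fun n hn => ?_⟩
  have hn1 : (1:ℝ) ≤ (n:ℝ) := by exact_mod_cast hn
  set w : ℕ × ℕ → ℝ := fun x => if Nat.gcd x.1 x.2 = 1 then
      ((μ x.1 * μ x.2 : ℤ):ℝ) / ((x.1:ℝ) * (x.2:ℝ))^(l-1) else 0 with hwdef
  set Hn := (Finset.Icc 1 n ×ˢ Finset.Icc 1 n).filter (fun p : ℕ×ℕ => p.1 * p.2 ≤ n) with hHndef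
  set A : ℕ × ℕ → ℕ := fun x =>
    #((Finset.Icc 1 n).filter (fun i => x.1 ∣ i ∧ x.2 ∣ (i+1) ∧ x.1 * x.2 ≤ i)) with hAdef
  -- Step 1: the double-counting swap
  have hswap : (∑ i ∈ Finset.Icc 1 n, ∑ d₁ ∈ i.divisors, ∑ d₂ ∈ (i + 1).divisors,
      if d₁ * d₂ ≤ i ∧ Nat.gcd d₁ d₂ = 1 then
        ((μ d₁ * μ d₂ : ℤ) : ℝ) / ((d₁ : ℝ) * (d₂ : ℝ)) ^ (l - 1)
      else 0) = ∑ x ∈ Hn, (A x : ℝ) * w x := by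
    have hstep : ∀ i ∈ Finset.Icc 1 n,
        (∑ d₁ ∈ i.divisors, ∑ d₂ ∈ (i + 1).divisors,
          if d₁ * d₂ ≤ i ∧ Nat.gcd d₁ d₂ = 1 then
            ((μ d₁ * μ d₂ : ℤ) : ℝ) / ((d₁ : ℝ) * (d₂ : ℝ)) ^ (l - 1)
          else 0)
        = ∑ x ∈ Hn, (if x.1 ∣ i ∧ x.2 ∣ (i+1) ∧ x.1 * x.2 ≤ i then w x else 0) := by
      intro i hi
      rw [Finset.mem_Icc] at hi
      rw [← Finset.sum_product']
      have hterm : ∀ x : ℕ × ℕ,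
          (if x.1 * x.2 ≤ i ∧ Nat.gcd x.1 x.2 = 1 then
            ((μ x.1 * μ x.2 : ℤ) : ℝ) / ((x.1 : ℝ) * (x.2 : ℝ)) ^ (l - 1) else 0)
          = if x.1 * x.2 ≤ i then w x else 0 := by
        intro x
        by_cases h1 : x.1 * x.2 ≤ i <;> by_cases h2 : Nat.gcd x.1 x.2 = 1 <;>
          simp [hwdef, h1, h2]
      rw [Finset.sum_congr rfl (fun x _ => hterm x)]
      have L1 : ∑ x ∈ i.divisors ×ˢ (i+1).divisors, (if x.1 * x.2 ≤ i then w x else 0)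
          = ∑ x ∈ (i.divisors ×ˢ (i+1).divisors).filter (fun x => x.1 * x.2 ≤ i), w x :=
        (Finset.sum_filter _ _).symm
      have R1 : ∑ x ∈ Hn, (if x.1 ∣ i ∧ x.2 ∣ (i+1) ∧ x.1 * x.2 ≤ i then w x else 0)
          = ∑ x ∈ Hn.filter (fun x => x.1 ∣ i ∧ x.2 ∣ (i+1) ∧ x.1 * x.2 ≤ i), w x :=
        (Finset.sum_filter _ _).symm
      rw [L1, R1]
      apply Finset.sum_congr ?_ (fun _ _ => rfl)
      ext x
      simp only [Finset.mem_filter, Finset.mem_product, Nat.mem_divisors, hHndef,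
        Finset.mem_Icc]
      constructor
      · rintro ⟨⟨⟨hd1, hi0⟩, hd2, _⟩, hle⟩
        have hx1 : 1 ≤ x.1 := Nat.pos_of_dvd_of_pos hd1 (by omega)
        have hx2 : 1 ≤ x.2 := Nat.pos_of_dvd_of_pos hd2 (by omega)
        have hxn : x.1 * x.2 ≤ n := le_trans hle hi.2
        refine ⟨⟨⟨⟨hx1, ?_⟩, hx2, ?_⟩, hxn⟩, hd1, hd2, hle⟩
        · exact le_trans (Nat.le_mul_of_pos_right _ hx2) hxn
        · exact le_trans (Nat.le_mul_of_pos_left _ hx1) hxn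
      · rintro ⟨-, hd1, hd2, hle⟩
        exact ⟨⟨⟨hd1, by omega⟩, hd2, by omega⟩, hle⟩
    rw [Finset.sum_congr rfl hstep, Finset.sum_comm]
    refine Finset.sum_congr rfl fun x _ => ?_
    have R2 : ∑ i ∈ Finset.Icc 1 n, (if x.1 ∣ i ∧ x.2 ∣ (i+1) ∧ x.1 * x.2 ≤ i then w x else 0)
        = ∑ _i ∈ (Finset.Icc 1 n).filter (fun i => x.1 ∣ i ∧ x.2 ∣ (i+1) ∧ x.1 * x.2 ≤ i), w x :=
      (Finset.sum_filter _ _).symm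
    rw [R2, Finset.sum_const, nsmul_eq_mul]
  -- Step 2: regroup the truncated Dirichlet series along hyperbolas
  have hIcc_g : ∑ m ∈ Finset.Icc 1 n, g m = ∑ x ∈ Hn, w x / ((x.1:ℝ) * (x.2:ℝ)) := by
    rw [← hypRegroup (fun x => w x / ((x.1:ℝ) * (x.2:ℝ))) n]
    refine Finset.sum_congr rfl fun m hm => ?_
    rw [Finset.mem_Icc] at hm
    have hgm : g m = (((∑ x ∈ m.divisorsAntidiagonal,
        if Nat.gcd x.1 x.2 = 1 then (μ x.1 * μ x.2 : ℤ) else 0) : ℤ) : ℝ) / (m:ℝ)^l := by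
      rw [lem_id]; simp only [hgdef]; push_cast; ring
    rw [hgm, Int.cast_sum, Finset.sum_div]
    refine Finset.sum_congr rfl fun x hx => ?_
    rw [Nat.mem_divisorsAntidiagonal] at hx
    have hx1 : 1 ≤ x.1 := Nat.pos_of_ne_zero (by rintro h; rw [h, zero_mul] at hx; omega)
    have hx2 : 1 ≤ x.2 := Nat.pos_of_ne_zero (by rintro h; rw [h, mul_zero] at hx; omega)
    by_cases h : Nat.gcd x.1 x.2 = 1
    · simp only [hwdef, h, if_pos, if_true]
      rw [div_div]
      congr 1
      rw [← hx.1]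
      push_cast
      rw [← pow_succ]
      congr 1
      omega
    · simp [hwdef, h]
  -- Step 3: termwise counting bound
  have hterm_bound : ∀ x ∈ Hn, |(A x : ℝ) * w x - (n:ℝ) * (w x / ((x.1:ℝ) * (x.2:ℝ)))|
      ≤ 2 * (n:ℝ)^δ * (φ x.1 * φ x.2) := by
    intro x hx
    rw [hHndef, Finset.mem_filter, Finset.mem_product, Finset.mem_Icc, Finset.mem_Icc] at hx
    obtain ⟨⟨⟨hx11, hx12⟩, hx21, hx22⟩, hxn⟩ := hx
    have hφφnn : 0 ≤ φ x.1 * φ x.2 := mul_nonneg (hφnn _) (hφnn _)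
    by_cases hgcd : Nat.gcd x.1 x.2 = 1
    swap
    · simp only [hwdef, if_neg hgcd]
      simp only [mul_zero, zero_div, zero_mul, sub_zero, abs_zero]
      positivity
    set M : ℕ := x.1 * x.2 with hMdef
    have hM1 : 1 ≤ M := Nat.one_le_iff_ne_zero.mpr (Nat.mul_ne_zero (by omega) (by omega))
    have hMR : (1:ℝ) ≤ (M:ℝ) := by exact_mod_cast hM1
    have hcast : ((x.1:ℝ) * (x.2:ℝ)) = (M:ℝ) := by rw [hMdef]; push_cast; ring
    obtain ⟨hA1, hA2⟩ := countAP hx11 hx21 hgcd hxn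
    have hA1' : n / M - 1 ≤ A x := hA1
    have hA2' : A x ≤ n / M := hA2
    clear hA1 hA2
    have hd1 : (A x : ℝ) ≤ (n:ℝ)/(M:ℝ) := by
      refine le_trans ?_ (Nat.cast_div_le)
      exact_mod_cast hA2'
    have hd2 : (n:ℝ)/(M:ℝ) ≤ (A x:ℝ) + 2 := by
      have e2 : n % M < M := Nat.mod_lt _ (by omega)
      have e1 : n < M * (n / M) + M := by
        have := Nat.div_add_mod n M; omega
      have e3 : (n:ℝ) < (M:ℝ) * ((n / M : ℕ):ℝ) + (M:ℝ) := by exact_mod_cast e1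
      have e4 : ((n / M : ℕ):ℝ) ≤ (A x:ℝ) + 1 := by exact_mod_cast (by omega : n / M ≤ A x + 1)

      rw [div_le_iff₀ (by positivity)]
      nlinarith
    have habsA : |(A x:ℝ) - (n:ℝ)/((x.1:ℝ) * (x.2:ℝ))| ≤ 2 := by
      rw [hcast, abs_le]; constructor <;> linarith
    have hw_le : |w x| ≤ 1 / ((M:ℝ))^(l-1) := by
      simp only [hwdef, if_pos hgcd]
      rw [abs_div]
      have h1 : |((μ x.1 * μ x.2 : ℤ):ℝ)| ≤ 1 := by
        have hb1 := ArithmeticFunction.abs_moebius_le_one (n := x.1)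
        have hb2 := ArithmeticFunction.abs_moebius_le_one (n := x.2)
        have : |μ x.1 * μ x.2| ≤ 1 := by
          rw [abs_mul]
          calc |μ x.1| * |μ x.2| ≤ 1 * 1 :=
            mul_le_mul hb1 hb2 (abs_nonneg _) zero_le_one
            _ = 1 := one_mul 1
        exact_mod_cast this
      rw [abs_of_nonneg (by positivity : (0:ℝ) ≤ ((x.1:ℝ) * (x.2:ℝ))^(l-1)), hcast]
      apply div_le_div_of_nonneg_right h1 (by positivity)
    have hfact : (A x : ℝ) * w x - (n:ℝ) * (w x / ((x.1:ℝ) * (x.2:ℝ)))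
        = w x * ((A x:ℝ) - (n:ℝ)/((x.1:ℝ) * (x.2:ℝ))) := by ring
    rw [hfact, abs_mul]
    have hφφ : φ x.1 * φ x.2 = 1 / ((M:ℝ)^(l-1) * (M:ℝ)^δ) := by
      simp only [hφdef]
      rw [phi_mul l δ x.1 x.2]
    calc |w x| * |(A x:ℝ) - (n:ℝ)/((x.1:ℝ) * (x.2:ℝ))|
        ≤ (1 / ((M:ℝ))^(l-1)) * 2 :=
          mul_le_mul hw_le habsA (abs_nonneg _) (by positivity)
      _ ≤ 2 * (n:ℝ)^δ * (φ x.1 * φ x.2) := by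
          rw [hφφ]
          have hMδ : (M:ℝ)^δ ≤ (n:ℝ)^δ :=
            Real.rpow_le_rpow (by positivity) (by exact_mod_cast hxn) hδ0.le
          have h1 : (0:ℝ) < (M:ℝ)^(l-1) := by positivity
          have h2 : (0:ℝ) < (M:ℝ)^δ := by positivity
          have e1 : (1 / ((M:ℝ))^(l-1)) * 2 = 2 / (M:ℝ)^(l-1) := by ring
          have e2 : 2 * (n:ℝ)^δ * (1 / ((M:ℝ)^(l-1) * (M:ℝ)^δ))
              = (2 * (n:ℝ)^δ) / ((M:ℝ)^(l-1) * (M:ℝ)^δ) := by ring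
          rw [e1, e2, div_le_div_iff₀ (by positivity) (by positivity)]
          nlinarith
  -- Step 4: main term estimate over the hyperbola region
  have hmain1 : |(∑ x ∈ Hn, (A x : ℝ) * w x) - (n:ℝ) * ∑ m ∈ Finset.Icc 1 n, g m|
      ≤ 2 * (n:ℝ)^δ * (K*K) := by
    rw [hIcc_g, Finset.mul_sum, ← Finset.sum_sub_distrib]
    calc |∑ x ∈ Hn, ((A x : ℝ) * w x - (n:ℝ) * (w x / ((x.1:ℝ) * (x.2:ℝ))))|
        ≤ ∑ x ∈ Hn, |(A x : ℝ) * w x - (n:ℝ) * (w x / ((x.1:ℝ) * (x.2:ℝ)))| :=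
          Finset.abs_sum_le_sum_abs _ _
      _ ≤ ∑ x ∈ Hn, 2 * (n:ℝ)^δ * (φ x.1 * φ x.2) := Finset.sum_le_sum hterm_bound
      _ = 2 * (n:ℝ)^δ * ∑ x ∈ Hn, φ x.1 * φ x.2 := by rw [Finset.mul_sum]
      _ ≤ 2 * (n:ℝ)^δ * (K*K) := by
          apply mul_le_mul_of_nonneg_left ?_ (by positivity)
          have hsub : ∑ x ∈ Hn, φ x.1 * φ x.2
              ≤ ∑ x ∈ Finset.Icc 1 n ×ˢ Finset.Icc 1 n, φ x.1 * φ x.2 :=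
            Finset.sum_le_sum_of_subset_of_nonneg (Finset.filter_subset _ _)
              (fun x _ _ => mul_nonneg (hφnn _) (hφnn _))
          have hprod : ∑ x ∈ Finset.Icc 1 n ×ˢ Finset.Icc 1 n, φ x.1 * φ x.2
              = (∑ a ∈ Finset.Icc 1 n, φ a) * (∑ b ∈ Finset.Icc 1 n, φ b) := by
            rw [Finset.sum_product, ← Finset.sum_mul_sum]
          have hle1 : (∑ a ∈ Finset.Icc 1 n, φ a) ≤ K :=
            Summable.sum_le_tsum _ (fun d _ => hφnn d) hφs
          have hnn1 : 0 ≤ ∑ a ∈ Finset.Icc 1 n, φ a := Finset.sum_nonneg fun d _ => hφnn d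
          calc ∑ x ∈ Hn, φ x.1 * φ x.2
              ≤ (∑ a ∈ Finset.Icc 1 n, φ a) * (∑ b ∈ Finset.Icc 1 n, φ b) := by
                rw [← hprod]; exact hsub
            _ ≤ K * K := mul_le_mul hle1 hle1 hnn1 hK0
  -- Step 5: tail estimate
  have hkey : ∀ M : ℕ, n + 1 ≤ M → (n:ℝ) * ‖g M‖ ≤ (n:ℝ)^δ * B M := by
    intro M hM
    have hM1 : 1 ≤ M := by omega
    have hM1R : (1:ℝ) ≤ (M:ℝ) := by exact_mod_cast hM1
    have hnM : (n:ℝ) ≤ (M:ℝ) := by exact_mod_cast (by omega : n ≤ M)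
    have hn0 : (0:ℝ) < (n:ℝ) := by linarith
    have hM0 : (0:ℝ) < (M:ℝ) := by linarith
    refine le_trans (mul_le_mul_of_nonneg_left (habs2 M hM1) (by positivity)) ?_
    simp only [hBdef]
    have e1 : (n:ℝ) * (M:ℝ)^δ ≤ (n:ℝ)^δ * (M:ℝ) := by
      have h3 : (n:ℝ)^(1-δ) ≤ (M:ℝ)^(1-δ) :=
        Real.rpow_le_rpow (by positivity) hnM (by linarith)
      have h1 : (n:ℝ) = (n:ℝ)^δ * (n:ℝ)^(1-δ) := by
        rw [← Real.rpow_add hn0]; norm_num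
      have h2 : (M:ℝ) = (M:ℝ)^δ * (M:ℝ)^(1-δ) := by
        rw [← Real.rpow_add hM0]; norm_num
      calc (n:ℝ) * (M:ℝ)^δ = (n:ℝ)^δ * (n:ℝ)^(1-δ) * (M:ℝ)^δ := by rw [← h1]
        _ ≤ (n:ℝ)^δ * (M:ℝ)^(1-δ) * (M:ℝ)^δ := by gcongr
        _ = (n:ℝ)^δ * ((M:ℝ)^δ * (M:ℝ)^(1-δ)) := by ring
        _ = (n:ℝ)^δ * (M:ℝ) := by rw [← h2]
    have hMl : (M:ℝ)^l = (M:ℝ)^(l-1) * (M:ℝ) := by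
      rw [← pow_succ]; congr 1; omega
    have lhs_eq : (n:ℝ) * ((#M.divisors:ℝ)/((M:ℝ))^l) = ((n:ℝ) * (#M.divisors:ℝ))/(M:ℝ)^l := by
      ring
    have rhs_eq : (n:ℝ)^δ * ((#M.divisors:ℝ)/((M:ℝ)^(l-1) * (M:ℝ)^δ))
        = ((n:ℝ)^δ * (#M.divisors:ℝ))/((M:ℝ)^(l-1) * (M:ℝ)^δ) := by ring
    rw [lhs_eq, rhs_eq, div_le_div_iff₀ (by positivity) (by positivity), hMl]
    nlinarith [mul_le_mul_of_nonneg_left e1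
      (mul_nonneg (Nat.cast_nonneg (α := ℝ) (#M.divisors)) (pow_nonneg hM0.le (l-1)))]
  have htail_sum : (n:ℝ) * |(∑ m ∈ Finset.Icc 1 n, g m) - ∑' m : ℕ, g m|
      ≤ (n:ℝ)^δ * (K*K) := by
    have hIcc_range : ∑ m ∈ Finset.range (n+1), g m = ∑ m ∈ Finset.Icc 1 n, g m := by
      have hins : Finset.range (n+1) = insert 0 (Finset.Icc 1 n) := by
        ext x; simp only [Finset.mem_range, Finset.mem_insert, Finset.mem_Icc]; omega
      rw [hins, Finset.sum_insert (by simp), hg0, zero_add]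
    have h := Summable.sum_add_tsum_nat_add (f := g) (n+1) hgsum
    have htail : (∑ m ∈ Finset.Icc 1 n, g m) - ∑' m : ℕ, g m
        = -∑' m : ℕ, g (m + (n+1)) := by
      rw [← hIcc_range]; linarith
    rw [htail, abs_neg]
    have hsn : Summable (fun m : ℕ => ‖g (m + (n+1))‖) :=
      (summable_nat_add_iff (n+1)).mpr hgnorm
    have h1 : |∑' m : ℕ, g (m + (n+1))| ≤ ∑' m : ℕ, ‖g (m + (n+1))‖ := by
      rw [← Real.norm_eq_abs]
      exact norm_tsum_le_tsum_norm hsn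
    have h3 : ∑' m : ℕ, (n:ℝ) * ‖g (m + (n+1))‖ ≤ ∑' m : ℕ, (n:ℝ)^δ * B (m + (n+1)) :=
      Summable.tsum_le_tsum (fun m => hkey (m + (n+1)) (by omega)) (hsn.mul_left _)
        (((summable_nat_add_iff (n+1)).mpr hBs).mul_left _)
    have h5 : ∑' m : ℕ, B (m + (n+1)) ≤ ∑' m : ℕ, B m := by
      have hB := Summable.sum_add_tsum_nat_add (f := B) (n+1) hBs
      have hnn : 0 ≤ ∑ m ∈ Finset.range (n+1), B m := Finset.sum_nonneg fun m _ => hBnn m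
      linarith
    calc (n:ℝ) * |∑' m : ℕ, g (m + (n+1))|
        ≤ (n:ℝ) * ∑' m : ℕ, ‖g (m + (n+1))‖ :=
          mul_le_mul_of_nonneg_left h1 (by positivity)
      _ = ∑' m : ℕ, (n:ℝ) * ‖g (m + (n+1))‖ := tsum_mul_left.symm
      _ ≤ ∑' m : ℕ, (n:ℝ)^δ * B (m + (n+1)) := h3
      _ = (n:ℝ)^δ * ∑' m : ℕ, B (m + (n+1)) := tsum_mul_left
      _ ≤ (n:ℝ)^δ * (K*K) :=
          mul_le_mul_of_nonneg_left (h5.trans hBK) (by positivity)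
  -- Step 6: conclusion
  rw [hP, hswap]
  have hsplit : (∑ x ∈ Hn, (A x : ℝ) * w x) - (n:ℝ) * ∑' m : ℕ, g m
      = ((∑ x ∈ Hn, (A x : ℝ) * w x) - (n:ℝ) * ∑ m ∈ Finset.Icc 1 n, g m)
        + (n:ℝ) * ((∑ m ∈ Finset.Icc 1 n, g m) - ∑' m : ℕ, g m) := by ring
  have hbound : |(∑ x ∈ Hn, (A x : ℝ) * w x) - (n:ℝ) * ∑' m : ℕ, g m|
      ≤ 3 * (K*K) * (n:ℝ)^δ := by
    rw [hsplit]
    refine le_trans (abs_add_le _ _) ?_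
    rw [abs_mul, abs_of_nonneg (by positivity : (0:ℝ) ≤ (n:ℝ))]
    linarith [hmain1, htail_sum]
  have hpow : (n:ℝ)^δ ≤ (n:ℝ)^ε := Real.rpow_le_rpow_of_exponent_le hn1 hδε
  have hεpos : (0:ℝ) < (n:ℝ)^ε := Real.rpow_pos_of_pos (by linarith) ε
  refine hbound.trans ?_
  nlinarith [mul_le_mul_of_nonneg_left hpow (by positivity : (0:ℝ) ≤ 3*(K*K))]
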